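/- Let k ≥ 1, let F be a nonempty compact subset of ℝ^k, and let f₁, …, f_n : F → F (n ≥ 1) be similarity contractions with F = f₁(F) ∪ ⋯ ∪ f_n(F). Put d = dim_H(F) and μ = H^d, and assume: d > k − 1; 0 < μ(F) < ∞; (i) μ(f_i(F) ∩ f_j(F)) = 0 for all i ≠ j; and (ii) there is no similarity contraction h of F with f_i(F) ⊊ h(F) for some i. Then f₁, …, f_n generate a free monoid of transformations of F: whenever f_{i₁} ∘ ⋯ ∘ f_{i_r} = f_{j₁} ∘ ⋯ ∘ f_{j_s} as maps F → F, one has r = s and i_t = j_t for all t. -/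

import Mathlib

open MeasureTheory
open scoped ENNReal

/-- an iterated function system `f₁, …, f_n` of similarity contractions of a
nonempty compact `F ⊆ ℝ^k` with `F = ⋃ fᵢ(F)`, `d = dim_H F > k - 1`, `0 < H^d(F) < ∞`,
measure-disjoint pieces, and no piece properly contained in the image of a similarity
contraction, generates a free monoid of transformations of `F`. -/
theorem stmt17 (k n : ℕ) (hk : 1 ≤ k) (hn : 1 ≤ n)
    (F : Set (EuclideanSpace ℝ (Fin k))) (hFne : F.Nonempty) (hFc : IsCompact F)
    (f : Fin n → F → F)
    (hf : ∀ i, ∃ c : ℝ, 0 < c ∧ c < 1 ∧ ∀ x y : F, dist (f i x) (f i y) = c * dist x y)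
    (hcover : ∀ y : F, ∃ i x, f i x = y)
    (d : ℝ) (hd : ENNReal.ofReal d = dimH F) (hdk : (k : ℝ) - 1 < d)
    (hμpos : 0 < μH[d] F) (hμfin : μH[d] F < ⊤)
    (hsep : ∀ i j, i ≠ j →
      μH[d] ((Subtype.val '' Set.range (f i)) ∩ (Subtype.val '' Set.range (f j))) = 0)
    (hmax : ∀ h : F → F,
      (∃ c : ℝ, 0 < c ∧ c < 1 ∧ ∀ x y : F, dist (h x) (h y) = c * dist x y) →
      ∀ i, ¬ (Subtype.val '' Set.range (f i) ⊂ Subtype.val '' Set.range h)) :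
    Function.Injective fun L : List (Fin n) => L.foldr (fun i g => f i ∘ g) id := by
  classical
  have hd0 : 0 < d := lt_of_le_of_lt (by exact_mod_cast sub_nonneg.mpr (by exact_mod_cast hk : (1:ℝ) ≤ k)) hdk
  -- the coercion `F → ℝ^k` is an isometry
  have hval : Isometry (Subtype.val : F → EuclideanSpace ℝ (Fin k)) := isometry_subtype_coe
  have key : ∀ s : Set F, μH[d] (Subtype.val '' s) = μH[d] s := fun s =>
    hval.hausdorffMeasure_image (Or.inl hd0.le) s
  have hFuniv : (Subtype.val '' (Set.univ : Set F)) = F := Subtype.coe_image_univ F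
  have hν0 : 0 < μH[d] (Set.univ : Set F) := by
    rw [← key, hFuniv]; exact hμpos
  have hνfin : μH[d] (Set.univ : Set F) < ⊤ := by
    rw [← key, hFuniv]; exact hμfin
  -- each composite is a similarity with positive ratio
  set G : List (Fin n) → F → F := fun L => L.foldr (fun i g => f i ∘ g) id with hG
  have hsim : ∀ L : List (Fin n), ∃ c : ℝ, 0 < c ∧
      ∀ x y : F, dist (G L x) (G L y) = c * dist x y := by
    intro L
    induction L with
    | nil => exact ⟨1, one_pos, fun x y => (one_mul _).symm⟩
    | cons i L ih =>
      obtain ⟨c, hc0, hc⟩ := ih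
      obtain ⟨ci, hci0, _, hci⟩ := hf i
      refine ⟨ci * c, mul_pos hci0 hc0, fun x y => ?_⟩
      show dist (f i (G L x)) (f i (G L y)) = ci * c * dist x y
      rw [hci, hc, mul_assoc]
  -- a similarity with positive ratio is injective
  have hinjg : ∀ (g : F → F) (c : ℝ), 0 < c →
      (∀ x y : F, dist (g x) (g y) = c * dist x y) → Function.Injective g := by
    intro g c hc0 hg x y hxy
    have : (0:ℝ) = c * dist x y := by rw [← hg, hxy, dist_self]
    have := (mul_eq_zero.mp this.symm).resolve_left (ne_of_gt hc0)
    exact dist_eq_zero.mp this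
  -- lower bound: the image of univ under a similarity has positive measure
  have hpos_im : ∀ (g : F → F) (c : ℝ), 0 < c →
      (∀ x y : F, dist (g x) (g y) = c * dist x y) →
      0 < μH[d] (Set.range g) := by
    intro g c hc0 hg
    have hanti : AntilipschitzWith (c⁻¹).toNNReal g := by
      apply AntilipschitzWith.of_le_mul_dist
      intro x y
      rw [hg, Real.coe_toNNReal _ (le_of_lt (inv_pos.mpr hc0)), ← mul_assoc,
        inv_mul_cancel₀ (ne_of_gt hc0), one_mul]
    by_contra h
    push_neg at h
    have h0 : μH[d] (Set.range g) = 0 := le_antisymm h zero_le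
    have := hanti.le_hausdorffMeasure_image hd0.le Set.univ
    rw [Set.image_univ, h0, mul_zero] at this
    exact absurd (le_antisymm this zero_le) (ne_of_gt hν0)
  -- a single map cannot be surjective
  have hnotid : ∀ (j : Fin n) (g : F → F), (fun x => f j (g x)) ≠ id := by
    intro j g hEq
    obtain ⟨cj, hcj0, hcj1, hcj⟩ := hf j
    have hsurj : Set.univ ⊆ f j '' Set.univ := by
      intro x _
      exact ⟨g x, Set.mem_univ _, congrFun hEq x⟩
    have hlip : LipschitzWith cj.toNNReal (f j) := by
      apply LipschitzWith.of_dist_le_mul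
      intro x y
      rw [hcj x y, Real.coe_toNNReal _ hcj0.le]
    have h1 : μH[d] (Set.univ : Set F) ≤ (cj.toNNReal : ℝ≥0∞) ^ d * μH[d] (Set.univ : Set F) :=
      le_trans (measure_mono hsurj) (hlip.hausdorffMeasure_image_le hd0.le _)
    have h2 : ((cj.toNNReal : ℝ≥0∞)) ^ d < 1 := by
      apply ENNReal.rpow_lt_one _ hd0
      rw [← ENNReal.coe_one]
      exact_mod_cast Real.toNNReal_lt_one.mpr hcj1
    have h3 : (cj.toNNReal : ℝ≥0∞) ^ d * μH[d] (Set.univ : Set F) < 1 * μH[d] (Set.univ : Set F) :=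
      by
        rw [mul_comm _ (μH[d] (Set.univ : Set F)), mul_comm 1]
        exact ENNReal.mul_lt_mul_right (ne_of_gt hν0) (ne_of_lt hνfin) h2
    rw [one_mul] at h3
    exact absurd (lt_of_le_of_lt h1 h3) (lt_irrefl _)
  -- the separation hypothesis, in the subtype
  have hsep' : ∀ i j, i ≠ j → μH[d] (Set.range (f i) ∩ Set.range (f j)) = 0 := by
    intro i j hij
    rw [← key, Set.image_inter Subtype.coe_injective]
    exact le_antisymm (le_of_le_of_eq (measure_mono le_rfl) (hsep i j hij)) zero_le
  -- main induction
  intro L M hLM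
  replace hLM : G L = G M := hLM
  induction L generalizing M with
  | nil =>
    cases M with
    | nil => rfl
    | cons j M => exact absurd (hLM.symm : (fun x => f j (G M x)) = id) (hnotid j (G M))
  | cons i L ih =>
    cases M with
    | nil => exact absurd (hLM : (fun x => f i (G L x)) = id) (hnotid i (G L))
    | cons j M =>
      by_cases hij : i = j
      · subst hij
        obtain ⟨ci, hci0, _, hci⟩ := hf i
        have hfi : Function.Injective (f i) := hinjg (f i) ci hci0 hci
        have : G L = G M := by
          funext x
          exact hfi (congrFun hLM x)
        rw [ih this]
      · exfalso
        obtain ⟨c, hc0, hc⟩ := hsim (i :: L)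
        have hpos := hpos_im (G (i :: L)) c hc0 hc
        have hsub : Set.range (G (i :: L)) ⊆ Set.range (f i) ∩ Set.range (f j) := by
          rintro y ⟨x, rfl⟩
          refine ⟨⟨G L x, rfl⟩, ?_⟩
          exact ⟨G M x, (congrFun hLM x).symm⟩
        have := le_trans (measure_mono hsub) (le_of_eq (hsep' i j hij))
        exact absurd (le_antisymm this zero_le) (ne_of_gt hpos)
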